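/- |c − r₀| ≤ r₀³ (V₀')² / (2(1 + V₀)²). -/

import Mathlib

theorem stmt_1
    (c : ℝ) (hc : 0 < c)
    (V V' V'' : ℝ → ℝ)
    (hV1 : ∀ x ∈ Set.Icc (-c) c, HasDerivAt V (V' x) x)
    (hV2 : ∀ x ∈ Set.Icc (-c) c, HasDerivAt V' (V'' x) x)
    (hV2c : ContinuousOn V'' (Set.Icc (-c) c))
    (hVnn : ∀ x ∈ Set.Icc (-c) c, 0 ≤ V x)
    (r v : ℝ → ℝ)
    (hr : ∀ x, r x = Real.sqrt (c ^ 2 - x ^ 2))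
    (hv : ∀ x, v x = r x * (1 + V x))
    (z₀ : ℝ) (hz₀ : z₀ ∈ Set.Ioo (-c) c)
    (hmax : ∀ x ∈ Set.Icc (-c) c, v x ≤ v z₀)
    :
    |c - r z₀| ≤ (r z₀) ^ 3 * (V' z₀) ^ 2 / (2 * (1 + V z₀) ^ 2) := by
  obtain ⟨hz1, hz2⟩ := hz₀
  have hzIcc : z₀ ∈ Set.Icc (-c) c := ⟨le_of_lt hz1, le_of_lt hz2⟩
  have hpos : 0 < c ^ 2 - z₀ ^ 2 := by nlinarith
  set s : ℝ := Real.sqrt (c ^ 2 - z₀ ^ 2) with hs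
  have hspos : 0 < s := Real.sqrt_pos.mpr hpos
  have hssq : s ^ 2 = c ^ 2 - z₀ ^ 2 := Real.sq_sqrt hpos.le
  have hsle : s ≤ c := by nlinarith
  have hVz : 0 ≤ V z₀ := hVnn z₀ hzIcc
  have h1V : 0 < 1 + V z₀ := by linarith
  -- derivative of inner function
  have hg : HasDerivAt (fun x : ℝ => c ^ 2 - x ^ 2) (-(2 * z₀)) z₀ := by
    simpa using ((hasDerivAt_pow 2 z₀).const_sub (c ^ 2))
  have hsne : (c ^ 2 - z₀ ^ 2) ≠ 0 := ne_of_gt hpos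
  have hsqrt : HasDerivAt (fun x : ℝ => Real.sqrt (c ^ 2 - x ^ 2))
      (-(2 * z₀) / (2 * s)) z₀ := by
    have := (Real.hasDerivAt_sqrt hsne).comp z₀ hg
    simpa [hs, mul_comm, div_eq_inv_mul, mul_assoc, Function.comp_def] using this
  have hVd : HasDerivAt (fun x : ℝ => 1 + V x) (V' z₀) z₀ :=
    (hV1 z₀ hzIcc).const_add 1
  have hvf : v = fun x => Real.sqrt (c ^ 2 - x ^ 2) * (1 + V x) := by
    funext x; rw [hv x, hr x]
  have hvd : HasDerivAt v
      (-(2 * z₀) / (2 * s) * (1 + V z₀) + s * V' z₀) z₀ := by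
    rw [hvf]
    exact hsqrt.mul hVd
  -- local max
  have hloc : IsLocalMax v z₀ := by
    have hnb : Set.Ioo (-c) c ∈ nhds z₀ := Ioo_mem_nhds hz1 hz2
    exact Filter.eventually_of_mem hnb fun x hx => hmax x ⟨hx.1.le, hx.2.le⟩
  have hzero : -(2 * z₀) / (2 * s) * (1 + V z₀) + s * V' z₀ = 0 :=
    hloc.hasDerivAt_eq_zero hvd
  have hkey : z₀ * (1 + V z₀) = s ^ 2 * V' z₀ := by
    have hsne' : s ≠ 0 := ne_of_gt hspos
    field_simp at hzero
    nlinarith [hzero]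
  have hrz : r z₀ = s := by rw [hr z₀]
  rw [hrz, abs_of_nonneg (by linarith : (0:ℝ) ≤ c - s),
    le_div_iff₀ (by positivity)]
  have hkey2 : z₀ ^ 2 * (1 + V z₀) ^ 2 = s ^ 4 * V' z₀ ^ 2 := by
    rw [show z₀ ^ 2 * (1 + V z₀) ^ 2 = (z₀ * (1 + V z₀)) ^ 2 by ring, hkey]; ring
  have hfac : (c - s) * (c + s) = z₀ ^ 2 := by nlinarith [hssq]
  nlinarith [mul_le_mul_of_nonneg_right (show 2 * s ≤ c + s by linarith)
    (mul_nonneg (by linarith : (0:ℝ) ≤ c - s) (sq_nonneg (1 + V z₀))), hspos]
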